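/- Let Z₁,...,Z_p be i.i.d. standard normal random variables, t ≥ 0, and θ₁,...,θ_p ∈ [0,1] with Σθᵢ = 1. Then E[Φ(t·√(Σᵢ θᵢ Zᵢ²))] ≥ E[Φ(t·|Z₁|)], where Φ is the standard normal CDF. -/
import Mathlib

open MeasureTheory ProbabilityTheory

/-- The standard normal cumulative distribution function. -/
noncomputable def Phi (x : ℝ) : ℝ := ((gaussianReal 0 1) (Set.Iic x)).toReal

/-- The standard multivariate normal distribution `N(0, I_p)` on `ℝᵖ`
(i.i.d. standard normal coordinates). -/
noncomputable def stdGaussianPi (p : ℕ) : Measure (Fin p → ℝ) :=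
  Measure.pi fun _ => gaussianReal 0 1

lemma continuous_pdf : Continuous (gaussianPDFReal 0 1) := by
  rw [gaussianPDFReal_def]; fun_prop

lemma Phi_eq (x : ℝ) : Phi x = ∫ y in Set.Iic x, gaussianPDFReal 0 1 y := by
  rw [Phi, gaussianReal_apply_eq_integral 0 one_ne_zero, ENNReal.toReal_ofReal]
  exact setIntegral_nonneg measurableSet_Iic fun y _ => gaussianPDFReal_nonneg 0 1 y

lemma hasDerivAt_Phi (x : ℝ) : HasDerivAt Phi (gaussianPDFReal 0 1 x) x := by
  have hint : Integrable (gaussianPDFReal 0 1) := integrable_gaussianPDFReal 0 1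
  have h1 : Phi = fun y => (∫ s in Set.Iic (0:ℝ), gaussianPDFReal 0 1 s)
      + ∫ s in (0:ℝ)..y, gaussianPDFReal 0 1 s := by
    funext y
    rw [Phi_eq, ← intervalIntegral.integral_Iic_sub_Iic hint.integrableOn hint.integrableOn]
    ring
  have h2 : HasDerivAt (fun y => ∫ s in (0:ℝ)..y, gaussianPDFReal 0 1 s)
      (gaussianPDFReal 0 1 x) x :=
    intervalIntegral.integral_hasDerivAt_right hint.intervalIntegrable
      (continuous_pdf.aestronglyMeasurable.stronglyMeasurableAtFilter)
      continuous_pdf.continuousAt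
  rw [h1]
  exact h2.const_add _

lemma monotone_Phi : Monotone Phi := fun a b h =>
  ENNReal.toReal_mono (measure_ne_top _ _) (measure_mono (Set.Iic_subset_Iic.2 h))

lemma concaveOn_Phi : ConcaveOn ℝ (Set.Ici 0) Phi := by
  have hdiff : Differentiable ℝ Phi := fun x => (hasDerivAt_Phi x).differentiableAt
  refine AntitoneOn.concaveOn_of_deriv (convex_Ici 0) hdiff.continuous.continuousOn
    hdiff.differentiableOn ?_
  intro a ha b hb hab
  rw [interior_Ici] at ha hb
  rw [(hasDerivAt_Phi a).deriv, (hasDerivAt_Phi b).deriv, gaussianPDFReal, gaussianPDFReal]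
  have hsq : (a - 0)^2 ≤ (b - 0)^2 := by
    simp only [sub_zero]
    exact pow_le_pow_left₀ ha.le hab 2
  have hexp : Real.exp (-(b-0)^2/(2*(1:NNReal))) ≤ Real.exp (-(a-0)^2/(2*(1:NNReal))) := by
    apply Real.exp_le_exp.2
    have h2 : ((2:ℝ)*((1:NNReal):ℝ)) = 2 := by norm_num
    rw [h2]
    linarith
  exact mul_le_mul_of_nonneg_left hexp (by positivity)

lemma Phi_nonneg (x : ℝ) : 0 ≤ Phi x := ENNReal.toReal_nonneg

lemma Phi_le_one (x : ℝ) : Phi x ≤ 1 := by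
  have := ENNReal.toReal_mono (measure_ne_top (gaussianReal 0 1) Set.univ)
    (measure_mono (Set.subset_univ (Set.Iic x)))
  simpa [Phi] using this

lemma map_eval (p : ℕ) (i : Fin p) :
    (stdGaussianPi p).map (fun z => z i) = gaussianReal 0 1 := by
  apply Measure.ext
  intro s hs
  rw [Measure.map_apply (measurable_pi_apply i) hs]
  have h : (fun z : Fin p → ℝ => z i) ⁻¹' s
      = Set.pi Set.univ (Function.update (fun _ => Set.univ) i s) := by
    ext z
    simp [Set.mem_univ_pi, Function.update_apply]
  rw [h, stdGaussianPi, Measure.pi_pi]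
  rw [Finset.prod_eq_single i (fun j _ hj => by simp [Function.update_of_ne hj])
    (fun h => absurd (Finset.mem_univ i) h)]
  simp

/-- For `Z₁,…,Z_p` i.i.d. standard normal, `t ≥ 0`, and convex weights `θᵢ ∈ [0,1]` with
`Σθᵢ = 1`, one has `E[Φ(t·√(Σθᵢ Zᵢ²))] ≥ E[Φ(t·|Z₁|)]`. -/
theorem expectation_Phi_weighted_ge (p : ℕ) (hp : 0 < p)
    (t : ℝ) (ht : 0 ≤ t) (θ : Fin p → ℝ)
    (hθ : ∀ i, θ i ∈ Set.Icc (0 : ℝ) 1) (hsum : ∑ i, θ i = 1) :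
    (∫ z, Phi (t * Real.sqrt (∑ i, θ i * z i ^ 2)) ∂(stdGaussianPi p)) ≥
      ∫ z, Phi (t * |z ⟨0, hp⟩|) ∂(stdGaussianPi p) := by
  have hθ0 : ∀ i, 0 ≤ θ i := fun i => (hθ i).1
  have hPm : Measurable Phi := monotone_Phi.measurable
  haveI : IsProbabilityMeasure (stdGaussianPi p) := by
    rw [stdGaussianPi]; infer_instance
  -- integrability helper
  have hInt : ∀ {f : (Fin p → ℝ) → ℝ}, Measurable f →
      Integrable (fun z => Phi (f z)) (stdGaussianPi p) := by
    intro f hf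
    refine (integrable_const (1:ℝ)).mono' (hPm.comp hf).aestronglyMeasurable ?_
    filter_upwards with z
    rw [Real.norm_eq_abs, abs_of_nonneg (Phi_nonneg _)]
    exact Phi_le_one _
  have hmeas_sqrt : Measurable fun z : Fin p → ℝ => t * Real.sqrt (∑ i, θ i * z i ^ 2) := by
    fun_prop
  have hmeas_i : ∀ i : Fin p, Measurable fun z : Fin p → ℝ => t * |z i| := by
    intro i; fun_prop
  -- pointwise inequality
  have hpt : ∀ z : Fin p → ℝ,
      ∑ i, θ i * Phi (t * |z i|) ≤ Phi (t * Real.sqrt (∑ i, θ i * z i ^ 2)) := by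
    intro z
    have hsqrt : ∑ i, θ i * |z i| ≤ Real.sqrt (∑ i, θ i * z i ^ 2) := by
      have := Real.strictConcaveOn_sqrt.concaveOn.le_map_sum
        (t := Finset.univ) (w := θ) (p := fun i => z i ^ 2)
        (fun i _ => hθ0 i) hsum (fun i _ => sq_nonneg (z i))
      simpa [smul_eq_mul, Real.sqrt_sq_eq_abs] using this
    have h1 : Phi (t * ∑ i, θ i * |z i|) ≤ Phi (t * Real.sqrt (∑ i, θ i * z i ^ 2)) :=
      monotone_Phi (mul_le_mul_of_nonneg_left hsqrt ht)
    refine le_trans ?_ h1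
    have := concaveOn_Phi.le_map_sum (t := Finset.univ) (w := θ)
      (p := fun i => t * |z i|) (fun i _ => hθ0 i) hsum
      (fun i _ => mul_nonneg ht (abs_nonneg _))
    simp only [smul_eq_mul] at this
    refine this.trans_eq ?_
    congr 1
    rw [Finset.mul_sum]
    exact Finset.sum_congr rfl fun i _ => by ring
  -- reduce each coordinate integral to a common value
  have key : ∀ i : Fin p, (∫ z, Phi (t * |z i|) ∂(stdGaussianPi p))
      = ∫ x, Phi (t * |x|) ∂(gaussianReal 0 1) := by
    intro i
    rw [← map_eval p i, integral_map (measurable_pi_apply i).aemeasurable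
      (hPm.comp (by fun_prop : Measurable fun x : ℝ => t * |x|)).aestronglyMeasurable]
  calc ∫ z, Phi (t * |z ⟨0, hp⟩|) ∂(stdGaussianPi p)
      = ∑ i, θ i * ∫ z, Phi (t * |z i|) ∂(stdGaussianPi p) := by
        simp_rw [key]
        rw [← Finset.sum_mul, hsum, one_mul]
    _ = ∫ z, ∑ i, θ i * Phi (t * |z i|) ∂(stdGaussianPi p) := by
        rw [integral_finset_sum _ (fun i _ => (hInt (hmeas_i i)).const_mul (θ i))]
        simp_rw [integral_const_mul]
    _ ≤ ∫ z, Phi (t * Real.sqrt (∑ i, θ i * z i ^ 2)) ∂(stdGaussianPi p) := by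
        refine integral_mono (integrable_finset_sum _
          (fun i _ => (hInt (hmeas_i i)).const_mul (θ i))) (hInt hmeas_sqrt) hpt
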